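/- For every partial trajectory τ = (s_m, s_{m+1}, …, s_n) whose endpoint s_n lies in S (i.e. s_n ≠ s_f), the Path Consistency Learning residual equals α times the Subtrajectory Balance residual: Δ_PCL(τ) = α Δ_SubTB(τ), under the identifications π_θ(s'|s) = P_F(s'|s) and V(s) = α log F(s). -/
import Mathlib


/-- Product of `f` over consecutive pairs of a list:
for `l = [v₀, …, v_k]`, `pairProd f l = ∏_{t=0}^{k-1} f v_t v_{t+1}`. -/
def pairProd {V : Type*} (f : V → V → ℝ) (l : List V) : ℝ :=
  ((l.zip l.tail).map (fun p => f p.1 p.2)).prod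

/-- Sum of `f` over consecutive pairs of a list. -/
def pairSum {V : Type*} (f : V → V → ℝ) (l : List V) : ℝ :=
  ((l.zip l.tail).map (fun p => f p.1 p.2)).sum

/-- `l` is a directed path from `a` to `b` in the graph with edge relation `E`. -/
def IsPath {V : Type*} (E : V → V → Prop) (a b : V) (l : List V) : Prop :=
  l.Chain' E ∧ l.head? = some a ∧ l.getLast? = some b

lemma pairProd_nil {V : Type*} (f : V → V → ℝ) : pairProd f ([] : List V) = 1 := by
  simp [pairProd]

lemma pairProd_single {V : Type*} (f : V → V → ℝ) (a : V) : pairProd f [a] = 1 := by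
  simp [pairProd]

lemma pairSum_single {V : Type*} (f : V → V → ℝ) (a : V) : pairSum f [a] = 0 := by
  simp [pairSum]

lemma pairProd_cons_cons {V : Type*} (f : V → V → ℝ) (a b : V) (l : List V) :
    pairProd f (a :: b :: l) = f a b * pairProd f (b :: l) := by
  simp [pairProd]

lemma pairSum_cons_cons {V : Type*} (f : V → V → ℝ) (a b : V) (l : List V) :
    pairSum f (a :: b :: l) = f a b + pairSum f (b :: l) := by
  simp [pairSum]

lemma chain'_ne_sf {V : Type*} {E : V → V → Prop} {sf b : V}
    (hsink : ∀ v : V, ¬ E sf v) (hb : b ≠ sf) :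
    ∀ l : List V, l.Chain' E → l.getLast? = some b → ∀ v ∈ l, v ≠ sf := by
  intro l
  induction l with
  | nil => intro _ h; simp at h
  | cons a t ih =>
    intro hch hlast v hv
    cases t with
    | nil =>
      simp at hlast hv
      subst hlast; subst hv; exact hb
    | cons c t' =>
      rcases List.isChain_cons_cons.1 hch with ⟨hac, hct⟩
      have hlast' : (c :: t').getLast? = some b := by
        simpa [List.getLast?_cons_cons] using hlast
      rcases List.mem_cons.1 hv with rfl | hv'
      · intro h; subst h; exact hsink c hac
      · exact ih hct hlast' v hv'

lemma pairProd_pos {V : Type*} {E : V → V → Prop} {P : V → V → ℝ}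
    (hP : ∀ s s' : V, E s s' → 0 < P s s') :
    ∀ l : List V, l.Chain' E → 0 < pairProd P l := by
  intro l
  induction l with
  | nil => intro _; simp [pairProd_nil]
  | cons a t ih =>
    intro hch
    cases t with
    | nil => simp [pairProd_single]
    | cons c t' =>
      rcases List.isChain_cons_cons.1 hch with ⟨hac, hct⟩
      rw [pairProd_cons_cons]
      exact mul_pos (hP _ _ hac) (ih hct)

lemma pairProd_pos_of_tail {V : Type*} {E : V → V → Prop} {PB : V → V → ℝ} {sf : V}
    (hPBpos : ∀ s s' : V, E s s' → s' ≠ sf → 0 < PB s s') :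
    ∀ l : List V, l.Chain' E → (∀ v ∈ l.tail, v ≠ sf) → 0 < pairProd PB l := by
  intro l
  induction l with
  | nil => intro _ _; simp [pairProd_nil]
  | cons a t ih =>
    intro hch htl
    cases t with
    | nil => simp [pairProd_single]
    | cons c t' =>
      rcases List.isChain_cons_cons.1 hch with ⟨hac, hct⟩
      rw [pairProd_cons_cons]
      refine mul_pos (hPBpos _ _ hac (htl c (by simp))) ?_
      exact ih hct (fun v hv => htl v (List.mem_cons_of_mem _ hv))

/-- On a soft MDP with the sparse corrected reward
`r(s,s') = α log P_B(s|s')`, `r(x,s_f) = -E(x)`, for every partial trajectory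
`τ = (s_m, …, s_n)` with `s_n ≠ s_f`, the PCL residual equals `α` times the SubTB residual,
under the identifications `π_θ(s'|s) = P_F(s'|s)` and `V(s) = α log F(s)`. -/
theorem pcl_residual_eq_subtb_residual
    {V : Type*} [Fintype V] [DecidableEq V]
    (E : V → V → Prop) [DecidableRel E] (s0 sf : V)
    (hacyc : ∀ v : V, ¬ Relation.TransGen E v v)
    (hsink : ∀ v : V, ¬ E sf v)
    (hreach : ∀ v : V, Relation.ReflTransGen E s0 v)
    (α : ℝ) (hα : 0 < α)
    (En : V → ℝ)
    (PB : V → V → ℝ)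
    (hPBpos : ∀ s s' : V, E s s' → s' ≠ sf → 0 < PB s s')
    (hPBsum : ∀ s' : V, s' ≠ sf → s' ≠ s0 →
      ∑ s ∈ Finset.univ.filter (fun s => E s s'), PB s s' = 1)
    (PF : V → V → ℝ) (hPFpos : ∀ s s' : V, E s s' → 0 < PF s s')
    (F : V → ℝ) (hFpos : ∀ s : V, s ≠ sf → 0 < F s)
    -- sparse corrected reward
    (r : V → V → ℝ)
    (hr : ∀ s s' : V, E s s' → s' ≠ sf → r s s' = α * Real.log (PB s s'))
    (hrf : ∀ x : V, E x sf → r x sf = -En x)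
    -- identifications π_θ = P_F and V(s) = α log F(s), V(s_f) = 0
    (Vf : V → ℝ)
    (hVf : ∀ s : V, s ≠ sf → Vf s = α * Real.log (F s))
    (hVsf : Vf sf = 0) :
    ∀ (a b : V) (l : List V), IsPath E a b l → b ≠ sf →
      -- Δ_PCL(τ) = α · Δ_SubTB(τ)
      -Vf a + Vf b + pairSum (fun s s' => r s s' - α * Real.log (PF s s')) l
        = α * (Real.log (F b * pairProd PB l) - Real.log (F a * pairProd PF l)) := by
  intro a b l hpath hb
  rcases hpath with ⟨hch, hhd, hlast⟩
  induction l generalizing a with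
  | nil => simp at hhd
  | cons x t ih =>
    have hax : x = a := by simpa using hhd
    subst hax
    have hne : ∀ v ∈ x :: t, v ≠ sf := chain'_ne_sf hsink hb _ hch hlast
    cases t with
    | nil =>
      have hxb : x = b := by simpa using hlast
      subst hxb
      simp [pairProd_single, pairSum_single]
    | cons c t' =>
      rcases List.isChain_cons_cons.1 hch with ⟨hxc, hct⟩
      have hlast' : (c :: t').getLast? = some b := by
        simpa [List.getLast?_cons_cons] using hlast
      have hhd' : (c :: t').head? = some c := rfl
      have IH := ih c hct hhd' hlast'
      have hxne : x ≠ sf := hne x (by simp)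
      have hcne : c ≠ sf := hne c (by simp)
      have hPBt : 0 < pairProd PB (c :: t') :=
        pairProd_pos_of_tail hPBpos _ hct
          (fun v hv => hne v (List.mem_cons_of_mem _ (List.mem_of_mem_tail hv)))
      have hPFt : 0 < pairProd PF (c :: t') := pairProd_pos hPFpos _ hct
      rw [pairProd_cons_cons, pairProd_cons_cons, pairSum_cons_cons,
        hr x c hxc hcne, hVf x hxne]
      rw [hVf c hcne] at IH
      have h1 : Real.log (F b * (PB x c * pairProd PB (c :: t')))
          = Real.log (PB x c) + Real.log (F b * pairProd PB (c :: t')) := by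
        rw [show F b * (PB x c * pairProd PB (c :: t'))
              = PB x c * (F b * pairProd PB (c :: t')) by ring,
          Real.log_mul (ne_of_gt (hPBpos _ _ hxc hcne))
            (ne_of_gt (mul_pos (hFpos b hb) hPBt))]
      have h2 : Real.log (F x * (PF x c * pairProd PF (c :: t')))
          = Real.log (F x) + Real.log (PF x c) + Real.log (pairProd PF (c :: t')) := by
        rw [Real.log_mul (ne_of_gt (hFpos x hxne))
            (ne_of_gt (mul_pos (hPFpos _ _ hxc) hPFt)),
          Real.log_mul (ne_of_gt (hPFpos _ _ hxc)) (ne_of_gt hPFt)]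
        ring
      have h3 : Real.log (F c * pairProd PF (c :: t'))
          = Real.log (F c) + Real.log (pairProd PF (c :: t')) := by
        rw [Real.log_mul (ne_of_gt (hFpos c hcne)) (ne_of_gt hPFt)]
      rw [h3] at IH
      rw [h1, h2]
      linear_combination IH
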